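/- Let D be an E-simple domain with maximal subfield K, and let f, g ∈ D \ K be algebraically dependent over K. Then p_f = p_g in R(D). In particular, if g ∈ K[f] \ K then p_f = p_g. -/

import Mathlib

noncomputable def recip (D : Type*) [CommRing D] [IsDomain D] : Subring (FractionRing D) :=
  Subring.closure {x | ∃ d : D, d ≠ 0 ∧ x = (algebraMap D (FractionRing D) d)⁻¹}

/-- `D` is E-simple: every nonzero Egyptian element is a unit. -/
def ESimple (D : Type*) [CommRing D] [IsDomain D] : Prop :=
  ∀ d : D, d ≠ 0 → algebraMap D (FractionRing D) d ∈ recip D → IsUnit d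

/-- `d` lies in the maximal subfield `K` of an E-simple domain `D`: it is `0` or
Egyptian. -/
def InMaxSubfield {D : Type*} [CommRing D] [IsDomain D] (d : D) : Prop :=
  algebraMap D (FractionRing D) d ∈ recip D

section Aux
variable {D : Type*} [CommRing D] [IsDomain D]

lemma mem_recip_inv (d : D) (hd : d ≠ 0) :
    (algebraMap D (FractionRing D) d)⁻¹ ∈ recip D :=
  Subring.subset_closure ⟨d, hd, rfl⟩

lemma alg_ne {d : D} (hd : d ≠ 0) : algebraMap D (FractionRing D) d ≠ 0 :=
  fun h => hd (IsFractionRing.injective D (FractionRing D) (by simpa using h))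

lemma egyptian_of_isUnit {f : D} (hf : IsUnit f) : InMaxSubfield f := by
  obtain ⟨v, hv⟩ := hf.exists_right_inv
  have hv0 : v ≠ 0 := by rintro rfl; simp at hv
  have : algebraMap D (FractionRing D) f = (algebraMap D (FractionRing D) v)⁻¹ := by
    apply eq_inv_of_mul_eq_one_left
    rw [← map_mul, hv, map_one]
  rw [InMaxSubfield, this]
  exact mem_recip_inv v hv0

end Aux

section Aux2
variable {D : Type*} [CommRing D] [IsDomain D]

lemma lemC (hD : ESimple D) {f : D} (hf : f ≠ 0) (hfK : ¬ InMaxSubfield f) :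
    ∀ (n : ℕ) (u : Fin n → D), (∀ i, InMaxSubfield (u i)) →
      (∑ i, u i * f ^ (i : ℕ)) = 0 → ∀ i, u i = 0 := by
  intro n
  induction n with
  | zero => intro u hu hrel i; exact i.elim0
  | succ n ih =>
    intro u hu hrel i
    have hsum : u 0 + (∑ i : Fin n, u i.succ * f ^ (i : ℕ)) * f = 0 := by
      rw [← hrel, Fin.sum_univ_succ, Finset.sum_mul]
      simp [pow_succ, mul_assoc]
    set S := ∑ i : Fin n, u i.succ * f ^ (i : ℕ) with hS
    by_cases h0 : u 0 = 0
    · have hSf : S * f = 0 := by rw [h0, zero_add] at hsum; exact hsum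
      have hS0 : S = 0 := by rcases mul_eq_zero.mp hSf with h | h; exact h; exact absurd h hf
      have := ih (fun i => u i.succ) (fun i => hu i.succ) hS0
      exact Fin.cases h0 (fun j => this j) i
    · exfalso
      have hu0 : u 0 = f * (-S) := by linear_combination hsum
      have : IsUnit (f * (-S)) := hu0 ▸ hD (u 0) h0 (hu 0)
      exact hfK (egyptian_of_isUnit (isUnit_of_mul_isUnit_left this))

lemma lemD {g : D} (hg : g ≠ 0) :
    ∀ (m : ℕ) (c : Fin m → D), (∑ j, c j * g ^ (j : ℕ)) = 0 →
      ∀ j₀ : Fin m, c j₀ ≠ 0 → ∃ (j : Fin m) (w : D), c j ≠ 0 ∧ c j = g * w := by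
  intro m
  induction m with
  | zero => intro c hrel j₀; exact j₀.elim0
  | succ m ih =>
    intro c hrel j₀ hj₀
    have hsum : c 0 + (∑ j : Fin m, c j.succ * g ^ (j : ℕ)) * g = 0 := by
      rw [← hrel, Fin.sum_univ_succ, Finset.sum_mul]
      simp [pow_succ, mul_assoc]
    set S := ∑ j : Fin m, c j.succ * g ^ (j : ℕ) with hS
    by_cases h0 : c 0 = 0
    · have hSg : S * g = 0 := by rw [h0, zero_add] at hsum; exact hsum
      have hS0 : S = 0 := by rcases mul_eq_zero.mp hSg with h | h; exact h; exact absurd h hg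
      have hj0' : ∃ j : Fin m, c j.succ ≠ 0 := by
        refine Fin.cases (fun h => absurd h0 h) (fun j h => ⟨j, h⟩) j₀ hj₀
      obtain ⟨j1, hj1⟩ := hj0'
      obtain ⟨j, w, hw1, hw2⟩ := ih (fun j => c j.succ) hS0 j1 hj1
      exact ⟨j.succ, w, hw1, hw2⟩
    · exact ⟨0, -S, h0, by linear_combination hsum⟩

lemma lemB (hD : ESimple D) {f : D} (hf : f ≠ 0)
    (q : Ideal (recip D)) (hq : q.IsPrime)
    (hfq : (⟨(algebraMap D (FractionRing D) f)⁻¹, mem_recip_inv f hf⟩ : recip D) ∉ q) :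
    ∀ (n : ℕ) (u : Fin n → D), (∀ i, InMaxSubfield (u i)) →
      ∀ (c : D), c = ∑ i, u i * f ^ (i : ℕ) → ∀ hc0 : c ≠ 0,
      (⟨(algebraMap D (FractionRing D) c)⁻¹, mem_recip_inv c hc0⟩ : recip D) ∉ q := by
  intro n
  induction n with
  | zero => intro u hu c hc hc0; rw [Finset.univ_eq_empty, Finset.sum_empty] at hc; exact absurd hc hc0
  | succ n ih =>
    intro u hu c hc hc0 hmem
    set d := ∑ i : Fin n, u i.succ * f ^ (i : ℕ) with hd
    have hcud : c = u 0 + d * f := by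
      rw [hc, Fin.sum_univ_succ, hd, Finset.sum_mul]
      simp [pow_succ, mul_assoc]
    by_cases h0 : u 0 = 0
    · -- c = d * f
      have hcdf : c = d * f := by rw [hcud, h0, zero_add]
      have hd0 : d ≠ 0 := by intro hdz; rw [hdz, zero_mul] at hcdf; exact hc0 hcdf
      have h1 : (⟨(algebraMap D (FractionRing D) c)⁻¹, mem_recip_inv c hc0⟩ : recip D)
          = ⟨(algebraMap D (FractionRing D) d)⁻¹, mem_recip_inv d hd0⟩ *
            ⟨(algebraMap D (FractionRing D) f)⁻¹, mem_recip_inv f hf⟩ := by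
        apply Subtype.ext
        show (algebraMap D (FractionRing D) c)⁻¹ = _
        rw [hcdf, map_mul, mul_inv]
        rfl
      rw [h1] at hmem
      rcases hq.mem_or_mem hmem with h | h
      · exact ih (fun i => u i.succ) (fun i => hu i.succ) d hd hd0 h
      · exact hfq h
    · by_cases hd0 : d = 0
      · -- c = u 0, 1/c is a unit
        have hcu : c = u 0 := by rw [hcud, hd0, zero_mul, add_zero]
        have hone : (⟨(algebraMap D (FractionRing D) c)⁻¹, mem_recip_inv c hc0⟩ : recip D) *
            ⟨algebraMap D (FractionRing D) (u 0), hu 0⟩ = 1 := by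
          apply Subtype.ext
          show (algebraMap D (FractionRing D) c)⁻¹ * algebraMap D (FractionRing D) (u 0) = 1
          rw [hcu]
          exact inv_mul_cancel₀ (alg_ne h0)
        exact hq.ne_top ((Ideal.eq_top_iff_one q).mpr (hone ▸ Ideal.mul_mem_right _ _ hmem))
      · set A : recip D := ⟨(algebraMap D (FractionRing D) f)⁻¹, mem_recip_inv f hf⟩ with hA
        set C : recip D := ⟨(algebraMap D (FractionRing D) c)⁻¹, mem_recip_inv c hc0⟩ with hC
        set Dd : recip D := ⟨(algebraMap D (FractionRing D) d)⁻¹, mem_recip_inv d hd0⟩ with hDd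
        set U : recip D := ⟨algebraMap D (FractionRing D) (u 0), hu 0⟩ with hU
        have halg : algebraMap D (FractionRing D) c
            = algebraMap D (FractionRing D) (u 0)
              + algebraMap D (FractionRing D) d * algebraMap D (FractionRing D) f := by
          rw [hcud]; push_cast [map_add, map_mul]; ring
        have key1 : (A - U * C * A) * Dd = C := by
          apply Subtype.ext
          show ((algebraMap D (FractionRing D) f)⁻¹
              - algebraMap D (FractionRing D) (u 0) * (algebraMap D (FractionRing D) c)⁻¹
                * (algebraMap D (FractionRing D) f)⁻¹) * (algebraMap D (FractionRing D) d)⁻¹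
              = (algebraMap D (FractionRing D) c)⁻¹
          have hfne := alg_ne hf
          have hcne := alg_ne hc0
          have hdne := alg_ne hd0
          field_simp
          linear_combination halg
        have hCmem := hmem
        rw [← key1] at hCmem
        rcases hq.mem_or_mem hCmem with h | h
        · -- s = A - U*C*A ∈ q, then A ∈ q
          have hAq : A ∈ q := by
            have h2 : U * C * A ∈ q := Ideal.mul_mem_right _ _ (Ideal.mul_mem_left _ _ hmem)
            have : A = (A - U * C * A) + U * C * A := by ring
            rw [this]
            exact Ideal.add_mem q h h2
          exact hfq hAq
        · exact ih (fun i => u i.succ) (fun i => hu i.succ) d hd hd0 h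

lemma main_half (hD : ESimple D) {f g : D} (hf : f ≠ 0) (hg : g ≠ 0)
    (hfK : ¬ InMaxSubfield f)
    (n m : ℕ) (u : Fin n → Fin m → D) (huK : ∀ i j, InMaxSubfield (u i j))
    (hunz : ∃ i j, u i j ≠ 0)
    (hrel : ∑ i, ∑ j, u i j * f ^ (i : ℕ) * g ^ (j : ℕ) = 0)
    (pf : Ideal (recip D)) (hpf : pf.IsPrime)
    (hfpf : (⟨(algebraMap D (FractionRing D) f)⁻¹, mem_recip_inv f hf⟩ : recip D) ∉ pf) :
    (⟨(algebraMap D (FractionRing D) g)⁻¹, mem_recip_inv g hg⟩ : recip D) ∉ pf := by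
  intro hmem
  set c : Fin m → D := fun j => ∑ i, u i j * f ^ (i : ℕ) with hcdef
  have hrel' : ∑ j, c j * g ^ (j : ℕ) = 0 := by
    rw [← hrel, Finset.sum_comm]
    simp [hcdef, Finset.sum_mul]
  obtain ⟨i0, j0, hu0⟩ := hunz
  have hcj0 : c j0 ≠ 0 := by
    intro hzero
    exact hu0 (lemC hD hf hfK n (fun i => u i j0) (fun i => huK i j0) hzero i0)
  obtain ⟨j, w, hcj, hcw⟩ := lemD hg m c hrel' j0 hcj0
  have hw0 : w ≠ 0 := by intro hw; rw [hw, mul_zero] at hcw; exact hcj hcw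
  have h1 : (⟨(algebraMap D (FractionRing D) (c j))⁻¹, mem_recip_inv (c j) hcj⟩ : recip D)
      = ⟨(algebraMap D (FractionRing D) w)⁻¹, mem_recip_inv w hw0⟩ *
        ⟨(algebraMap D (FractionRing D) g)⁻¹, mem_recip_inv g hg⟩ := by
    apply Subtype.ext
    show (algebraMap D (FractionRing D) (c j))⁻¹ = _
    rw [hcw, map_mul, mul_inv]
    show _ = (algebraMap D (FractionRing D) w)⁻¹ * (algebraMap D (FractionRing D) g)⁻¹
    ring
  have hmem2 : (⟨(algebraMap D (FractionRing D) (c j))⁻¹, mem_recip_inv (c j) hcj⟩ : recip D) ∈ pf := by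
    rw [h1]; exact Ideal.mul_mem_left _ _ hmem
  exact lemB hD hf pf hpf hfpf n (fun i => u i j) (fun i => huK i j) (c j) rfl hcj hmem2

end Aux2

/-- `p` is the prime ideal `p_x` of `R(D)`: the unique prime maximal with respect to
not containing `1/x`. -/
def IsPx {D : Type*} [CommRing D] [IsDomain D] (x : D) (hx : x ≠ 0)
    (p : Ideal (recip D)) : Prop :=
  p.IsPrime ∧
  (⟨(algebraMap D (FractionRing D) x)⁻¹,
    Subring.subset_closure ⟨x, hx, rfl⟩⟩ : recip D) ∉ p ∧
  ∀ q : Ideal (recip D), q.IsPrime →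
    (⟨(algebraMap D (FractionRing D) x)⁻¹,
      Subring.subset_closure ⟨x, hx, rfl⟩⟩ : recip D) ∉ q → q ≤ p

/-- Let `D` be an E-simple domain with maximal subfield `K`, and let
`f, g ∈ D \ K` be algebraically dependent over `K` (there is a nontrivial polynomial
relation `∑ u_{ij} f^i g^j = 0` with coefficients `u_{ij} ∈ K`).  Then `p_f = p_g`. -/
theorem stmt_18 {D : Type*} [CommRing D] [IsDomain D] (hD : ESimple D)
    (f g : D) (hf : f ≠ 0) (hg : g ≠ 0)
    (hfK : ¬ InMaxSubfield f) (hgK : ¬ InMaxSubfield g)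
    (n m : ℕ) (u : Fin n → Fin m → D)
    (huK : ∀ i j, InMaxSubfield (u i j))
    (hunz : ∃ i j, u i j ≠ 0)
    (hrel : ∑ i, ∑ j, u i j * f ^ (i : ℕ) * g ^ (j : ℕ) = 0)
    (pf pg : Ideal (recip D)) (hpf : IsPx f hf pf) (hpg : IsPx g hg pg) :
    pf = pg := by
  obtain ⟨hpf1, hpf2, hpf3⟩ := hpf
  obtain ⟨hpg1, hpg2, hpg3⟩ := hpg
  have hrel2 : ∑ j, ∑ i, (fun j i => u i j) j i * g ^ (j : ℕ) * f ^ (i : ℕ) = 0 := by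
    rw [Finset.sum_comm] at hrel
    rw [← hrel]
    apply Finset.sum_congr rfl; intro j _
    apply Finset.sum_congr rfl; intro i _
    ring
  have h1 : (⟨(algebraMap D (FractionRing D) g)⁻¹, mem_recip_inv g hg⟩ : recip D) ∉ pf :=
    main_half hD hf hg hfK n m u huK hunz hrel pf hpf1 hpf2
  have h2 : (⟨(algebraMap D (FractionRing D) f)⁻¹, mem_recip_inv f hf⟩ : recip D) ∉ pg :=
    main_half hD hg hf hgK m n (fun j i => u i j) (fun j i => huK i j)
      (by obtain ⟨i, j, h⟩ := hunz; exact ⟨j, i, h⟩) hrel2 pg hpg1 hpg2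
  exact le_antisymm (hpg3 pf hpf1 h1) (hpf3 pg hpg1 h2)
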